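/- Let q be odd and n even, K = F_{q^n}, k = F_q. Then the determinant of the Gram matrix T = (Tr_{K/k}(β_i β_j)) of the trace bilinear form with respect to any k-basis (β_1,…,β_n) of K is a non-square in F_q^×. -/

import Mathlib

open Matrix

theorem det_trace_gram_matrix_nonsquare
    {k K : Type*} [Field k] [Fintype k] [Field K] [Fintype K] [Algebra k K]
    {n : ℕ} (hn : Even n) (hq : Odd (Fintype.card k))
    (hcard : Fintype.card K = Fintype.card k ^ n)
    (b : Module.Basis (Fin n) k K) :
    ¬ IsSquare (Matrix.det
      (Matrix.of fun i j : Fin n => Algebra.trace k K (b i * b j))) := by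
  classical
  have hq1 : 1 < Fintype.card k := Fintype.one_lt_card
  set q := Fintype.card k with hqdef
  have hn0 : n ≠ 0 := by
    rintro rfl
    rw [pow_zero] at hcard
    exact absurd hcard (Fintype.one_lt_card (α := K)).ne'
  have hn2 : 2 ≤ n := by
    rcases hn with ⟨t, rfl⟩
    omega
  have hq3 : 3 ≤ q := by
    rcases hq with ⟨t, ht⟩
    omega
  haveI : FiniteDimensional k K := Module.Finite.of_finite
  have hrank : Module.finrank k K = n := by
    have h := Module.card_eq_pow_finrank (K := k) (V := K)
    rw [hcard, ← hqdef] at h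
    exact (Nat.pow_right_injective hq1 h).symm
  -- characteristic
  obtain ⟨p, hp⟩ := CharP.exists k
  haveI : CharP k p := hp
  haveI : CharP K p := charP_of_injective_algebraMap (algebraMap k K).injective p
  haveI hpf : Fact p.Prime := ⟨CharP.char_is_prime k p⟩
  obtain ⟨m, -, hm⟩ := FiniteField.card k p
  have hp2 : p ≠ 2 := by
    intro h
    have hdvd : p ∣ q := by
      rw [hqdef, hm]
      exact dvd_pow_self p m.2.ne'
    rw [h] at hdvd
    rw [Nat.odd_iff] at hq
    omega
  -- Frobenius as an algebra automorphism
  have hcomm : ∀ c : k, algebraMap k K c ^ q = algebraMap k K c := by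
    intro c; rw [hqdef, ← map_pow, FiniteField.pow_card]
  let Fh : K →ₐ[k] K :=
    { toFun := fun x => x ^ q
      map_one' := one_pow q
      map_mul' := fun x y => mul_pow x y q
      map_zero' := zero_pow (by omega)
      map_add' := fun x y => by
        show (x + y) ^ q = x ^ q + y ^ q
        rw [hqdef, hm]
        exact add_pow_char_pow x y p ↑m
      commutes' := hcomm }
  have hFhinj : Function.Injective Fh := Fh.toRingHom.injective
  let ψ : K ≃ₐ[k] K :=
    AlgEquiv.ofBijective Fh ((Fintype.bijective_iff_injective_and_card _).mpr ⟨hFhinj, rfl⟩)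
  have hψ : ∀ x : K, ψ x = x ^ q := fun x => rfl
  have hψpow : ∀ (l : ℕ) (x : K), (ψ ^ l) x = x ^ q ^ l := by
    intro l
    induction l with
    | zero => intro x; simp
    | succ l ih =>
      intro x
      rw [pow_succ', AlgEquiv.mul_apply, ih, hψ, ← pow_mul, ← pow_succ]
  have hFq : ∀ x : K, x ^ q ^ n = x := by
    intro x; rw [← hcard]; exact FiniteField.pow_card x
  -- the automorphism group is ⟨ψ⟩, of order n
  obtain ⟨g, hg⟩ := IsCyclic.exists_generator (α := Kˣ)
  have hog : orderOf g = q ^ n - 1 := by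
    rw [orderOf_eq_card_of_forall_mem_zpowers hg, Nat.card_eq_fintype_card, Fintype.card_units, hcard]
  have hginj : Function.Injective (fun l : Fin n => ψ ^ (l : ℕ)) := by
    intro i j hij
    have h1 : (g : K) ^ q ^ (i : ℕ) = (g : K) ^ q ^ (j : ℕ) := by
      have := congrArg (fun e : K ≃ₐ[k] K => e (g : K)) hij
      simpa [hψpow] using this
    have h2 : g ^ q ^ (i : ℕ) = g ^ q ^ (j : ℕ) := by
      apply Units.ext
      rw [Units.val_pow_eq_pow_val, Units.val_pow_eq_pow_val]
      exact h1
    have h3 : q ^ (i : ℕ) ≡ q ^ (j : ℕ) [MOD q ^ n - 1] := by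
      rw [← hog]; exact pow_eq_pow_iff_modEq.mp h2
    have hlt : ∀ l : Fin n, q ^ (l : ℕ) < q ^ n - 1 := by
      intro l
      have h4 : q ^ (l : ℕ) ≤ q ^ (n - 1) :=
        Nat.pow_le_pow_right (by omega) (by omega)
      have h5 : q ^ n = q ^ (n - 1) * q := by
        rw [← pow_succ]; congr 1; omega
      have h6 : 1 ≤ q ^ (n - 1) := Nat.one_le_pow _ _ (by omega)
      have h7 : q ^ (n - 1) * 3 ≤ q ^ n := by
        rw [h5]; exact Nat.mul_le_mul_left _ hq3
      have h8 : q ^ (l : ℕ) + 1 < q ^ n := by linarith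
      exact Nat.lt_sub_of_add_lt h8
    have h7 : q ^ (i : ℕ) = q ^ (j : ℕ) := by
      have := h3
      unfold Nat.ModEq at this
      rw [Nat.mod_eq_of_lt (hlt i), Nat.mod_eq_of_lt (hlt j)] at this
      exact this
    exact Fin.ext (Nat.pow_right_injective hq1 h7)
  have hbij : Function.Bijective (fun l : Fin n => ψ ^ (l : ℕ)) :=
    (Fintype.bijective_iff_injective_and_card _).mpr
      ⟨hginj, by rw [Fintype.card_fin, ← Nat.card_eq_fintype_card, IsGalois.card_aut_eq_finrank, hrank]⟩
  let e : Fin n ≃ (K ≃ₐ[k] K) := Equiv.ofBijective _ hbij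
  have htr : ∀ x : K, algebraMap k K (Algebra.trace k K x) = ∑ l : Fin n, x ^ q ^ (l : ℕ) := by
    intro x
    rw [trace_eq_sum_automorphisms, ← Equiv.sum_comp e (fun σ : K ≃ₐ[k] K => σ x)]
    refine Finset.sum_congr rfl fun l _ => ?_
    show (ψ ^ (l : ℕ)) x = x ^ q ^ (l : ℕ)
    exact hψpow _ x
  -- power basis
  haveI : Algebra.IsSeparable k K := IsGalois.to_isSeparable
  let pb : PowerBasis k K := Field.powerBasisOfFiniteOfSeparable k K
  have hdim : pb.dim = n := by rw [← pb.finrank, hrank]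
  let b' : Module.Basis (Fin n) k K := pb.basis.reindex (finCongr hdim)
  have hb' : ∀ i : Fin n, b' i = pb.gen ^ (i : ℕ) := by
    intro i
    rw [Module.Basis.reindex_apply, PowerBasis.basis_eq_pow]
    simp
  set α := pb.gen with hαdef
  -- the vandermonde determinant
  set v : Fin n → K := fun i => α ^ q ^ (i : ℕ) with hvdef
  set δ : K := (Matrix.vandermonde v).det with hδdef
  have hδ2 : algebraMap k K (Algebra.discr k ⇑b') = δ ^ 2 := by
    have hMap : (Algebra.traceMatrix k ⇑b').map (algebraMap k K)
        = (Matrix.vandermonde v)ᵀ * Matrix.vandermonde v := by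
      ext i j
      rw [Matrix.map_apply, Algebra.traceMatrix_apply, Algebra.traceForm_apply, htr,
        Matrix.mul_apply]
      refine Finset.sum_congr rfl fun l _ => ?_
      rw [Matrix.transpose_apply, Matrix.vandermonde_apply, Matrix.vandermonde_apply,
        hb', hb']
      rw [mul_pow, ← pow_mul, ← pow_mul, ← pow_mul, ← pow_mul]
      ring
    rw [Algebra.discr_def, RingHom.map_det, RingHom.mapMatrix_apply, hMap, det_mul, det_transpose, ← hδdef, sq]
  have hdn0 : Algebra.discr k ⇑b' ≠ 0 := Algebra.discr_not_zero_of_basis k b'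
  have hδ0 : δ ≠ 0 := by
    intro h
    apply hdn0
    apply (algebraMap k K).injective
    rw [hδ2, h, map_zero]
    ring
  -- Frobenius sends δ to -δ
  have hfix : ∀ t : ℕ, α ^ q ^ (n * t) = α := by
    intro t
    induction t with
    | zero => simp
    | succ t ih =>
      calc α ^ q ^ (n * (t + 1)) = (α ^ q ^ (n * t)) ^ q ^ n := by
            rw [← pow_mul, ← pow_add, Nat.mul_succ]
        _ = α ^ q ^ (n * t) := hFq _
        _ = α := ih
  have hper : ∀ j : ℕ, α ^ q ^ j = α ^ q ^ (j % n) := by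
    intro j
    conv_lhs => rw [← Nat.div_add_mod j n]
    rw [pow_add, pow_mul, hfix]
  have hψδ : ψ δ = -δ := by
    obtain ⟨m', rfl⟩ : ∃ m', n = m' + 1 := ⟨n - 1, by omega⟩
    have hm1 : 1 ≤ m' := by omega
    have hrot : ∀ i : Fin (m' + 1), ψ (v i) = v (finRotate (m' + 1) i) := by
      intro i
      rw [hψ]
      show (α ^ q ^ (i : ℕ)) ^ q = α ^ q ^ ((finRotate (m' + 1) i : ℕ))
      rw [← pow_mul, ← pow_succ]
      rw [hper ((i : ℕ) + 1), hper ((finRotate (m' + 1) i : ℕ))]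
      congr 2
      rw [finRotate_succ_apply, Fin.val_add, Nat.mod_mod_of_dvd _ dvd_rfl, Fin.val_one',
        Nat.one_mod_eq_one.mpr (by omega)]
    have hmap : (Matrix.vandermonde v).map ⇑ψ
        = (Matrix.vandermonde v).submatrix (finRotate (m' + 1)) id := by
      ext i j
      simp only [Matrix.map_apply, Matrix.vandermonde_apply, Matrix.submatrix_apply, id]
      rw [_root_.map_pow, hrot]
    have hodd : Odd m' := by
      rw [← Nat.not_even_iff_odd]
      intro h
      rw [Nat.even_add_one] at hn
      exact hn h
    calc ψ δ = ((Matrix.vandermonde v).map ⇑ψ).det := by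
          rw [AlgEquiv.map_det, AlgEquiv.mapMatrix_apply]
      _ = ((Matrix.vandermonde v).submatrix (finRotate (m' + 1)) id).det := by rw [hmap]
      _ = Equiv.Perm.sign (finRotate (m' + 1)) * δ := Matrix.det_permute _ _
      _ = -δ := by
          rw [sign_finRotate, Nat.add_sub_cancel, Odd.neg_one_pow hodd]
          simp
  -- reduce the goal to the discriminant of b'
  have hgoal : (Matrix.of fun i j : Fin n => Algebra.trace k K (b i * b j))
      = Algebra.traceMatrix k ⇑b := by
    ext i j
    rw [Algebra.traceMatrix_apply, Algebra.traceForm_apply, Matrix.of_apply]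
  rw [hgoal, ← Algebra.discr_def]
  intro hsq
  -- transfer to the power basis b'
  have hsq' : IsSquare (Algebra.discr k ⇑b') := by
    have hb : ⇑b = ⇑b' ᵥ* ((b'.toMatrix ⇑b).map (algebraMap k K)) :=
      (b'.toMatrix_map_vecMul ⇑b).symm
    rw [hb, Algebra.discr_of_matrix_vecMul] at hsq
    obtain ⟨c, hc⟩ := hsq
    have hPdet : (b'.toMatrix ⇑b).det ≠ 0 := by
      have h1 : (b'.toMatrix ⇑b * b.toMatrix ⇑b').det = 1 := by
        rw [Module.Basis.toMatrix_mul_toMatrix_flip, det_one]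
      intro h
      rw [det_mul, h, zero_mul] at h1
      exact zero_ne_one h1
    refine ⟨c / (b'.toMatrix ⇑b).det, ?_⟩
    field_simp
    linear_combination hc
  -- derive the contradiction
  obtain ⟨c, hc⟩ := hsq'
  set a : K := algebraMap k K c with hadef
  have ha2 : δ ^ 2 = a * a := by
    rw [← hδ2, hc, _root_.map_mul]
  have hfactor : (δ - a) * (δ + a) = 0 := by linear_combination ha2
  have hψa : ψ a = a := by
    rw [hψ, hadef, hqdef, ← map_pow, FiniteField.pow_card]
  have hδfix : ψ δ = δ := by
    rcases mul_eq_zero.mp hfactor with h | h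
    · have hδa : δ = a := by linear_combination h
      rw [hδa, hψa]
    · have hδa : δ = -a := by linear_combination h
      rw [hδa, map_neg, hψa]
  have h2δ : (2 : K) * δ = 0 := by
    have := hψδ
    rw [hδfix] at this
    linear_combination this
  have h2 : (2 : K) ≠ 0 := by
    intro h
    have h2' : ((2 : ℕ) : K) = 0 := by exact_mod_cast h
    have := (CharP.cast_eq_zero_iff K p 2).mp h2'
    exact hp2 ((Nat.prime_dvd_prime_iff_eq hpf.out Nat.prime_two).mp this)
  rcases mul_eq_zero.mp h2δ with h | h
  · exact h2 h
  · exact hδ0 h
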